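/- Let ζ = (1+√3·i)/2 ∈ ℂ and let z ∈ ℤ[ζ] have combinatorial length ‖z‖ ≥ 6. Then every nonzero multiple t = wz (with w ∈ ℤ[ζ], w ≠ 0) satisfies ‖t‖ ≥ 6. -/

import Mathlib

/-- ζ = (1+√3·i)/2, a primitive sixth root of unity. -/
noncomputable def zeta6 : ℂ := (1 + Real.sqrt 3 * Complex.I) / 2

/-- The Eisenstein integers ℤ[ζ], the subring of ℂ generated by ζ. -/
noncomputable def Eisenstein : Subring ℂ := Subring.closure {zeta6}

/-- The combinatorial length: the minimal number n of units of ℤ[ζ]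
(= sixth roots of unity) summing to z. -/
noncomputable def combLen (z : ℂ) : ℕ :=
  sInf {n : ℕ | ∃ f : Fin n → ℂ, (∀ k, (f k) ^ 6 = 1) ∧ z = ∑ k, f k}

lemma zeta6_sq : zeta6^2 = zeta6 - 1 := by
  unfold zeta6
  have s3 : ((Real.sqrt 3 : ℝ) : ℂ)^2 = 3 := by
    rw [← Complex.ofReal_pow, Real.sq_sqrt] <;> norm_num
  linear_combination (Complex.I_sq) * ((Real.sqrt 3:ℝ):ℂ)^2/4 + s3 * (-1/4 : ℂ)

lemma zeta6_pow6 : zeta6^6 = 1 := by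
  linear_combination (zeta6^4 + zeta6^3 - zeta6 - 1) * zeta6_sq

lemma zeta6_sq_pow6 : (zeta6^2)^6 = 1 := by
  rw [← pow_mul, mul_comm, pow_mul, zeta6_pow6, one_pow]

lemma normSq_rep (a b : ℤ) :
    Complex.normSq ((a : ℂ) + (b : ℂ) * zeta6) = (a:ℝ)^2 + a*b + b^2 := by
  have h3 : Real.sqrt 3 ^ 2 = 3 := Real.sq_sqrt (by norm_num)
  simp [Complex.normSq_apply, zeta6, Complex.add_re, Complex.add_im, Complex.div_re,
    Complex.div_im, Complex.mul_re, Complex.mul_im]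
  ring_nf
  nlinarith [h3]

lemma rep_of_mem {x : ℂ} (hx : x ∈ Eisenstein) : ∃ a b : ℤ, x = (a:ℂ) + (b:ℂ) * zeta6 := by
  induction hx using Subring.closure_induction with
  | mem x hx => exact ⟨0, 1, by simp [Set.mem_singleton_iff.mp hx]⟩
  | zero => exact ⟨0, 0, by simp⟩
  | one => exact ⟨1, 0, by simp⟩
  | add x y _ _ hx hy =>
      obtain ⟨a, b, rfl⟩ := hx; obtain ⟨c, d, rfl⟩ := hy
      exact ⟨a + c, b + d, by push_cast; ring⟩
  | neg x _ hx =>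
      obtain ⟨a, b, rfl⟩ := hx
      exact ⟨-a, -b, by push_cast; ring⟩
  | mul x y _ _ hx hy =>
      obtain ⟨a, b, rfl⟩ := hx; obtain ⟨c, d, rfl⟩ := hy
      refine ⟨a*c - b*d, a*d + b*c + b*d, ?_⟩
      push_cast
      linear_combination (b:ℂ)*(d:ℂ)*zeta6_sq

lemma mem_set_nat (u v : ℂ) (hu : u^6 = 1) (hv : v^6 = 1) (m n : ℕ) :
    (m + n) ∈ {k : ℕ | ∃ f : Fin k → ℂ, (∀ j, (f j) ^ 6 = 1) ∧ (m:ℂ)*u + (n:ℂ)*v = ∑ j, f j} := by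
  refine ⟨Fin.append (fun _ => u) (fun _ => v), ?_, ?_⟩
  · intro j
    induction j using Fin.addCases with
    | left j => simpa using hu
    | right j => simpa using hv
  · rw [Fin.sum_univ_add]
    simp [mul_comm]

lemma cast_natAbs_nonneg {a : ℤ} (ha : 0 ≤ a) : ((a.natAbs : ℂ)) = (a : ℂ) := by
  have h : ((a.natAbs : ℤ)) = a := Int.natAbs_of_nonneg ha
  rw [← Int.cast_natCast (R := ℂ), h]

lemma cast_natAbs_neg {a : ℤ} (ha : a < 0) : ((a.natAbs : ℂ)) = -(a : ℂ) := by
  have h : (a.natAbs : ℤ) = -a := Int.ofNat_natAbs_of_nonpos ha.le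
  rw [← Int.cast_natCast (R := ℂ), h, Int.cast_neg]

lemma mem_set_int (u v : ℂ) (hu : u^6 = 1) (hv : v^6 = 1) (a b : ℤ) :
    (a.natAbs + b.natAbs) ∈
      {k : ℕ | ∃ f : Fin k → ℂ, (∀ j, (f j) ^ 6 = 1) ∧ (a:ℂ)*u + (b:ℂ)*v = ∑ j, f j} := by
  have hu' : (-u)^6 = 1 := by rw [Even.neg_pow (by decide)]; exact hu
  have hv' : (-v)^6 = 1 := by rw [Even.neg_pow (by decide)]; exact hv
  set u' : ℂ := if 0 ≤ a then u else -u with hud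
  set v' : ℂ := if 0 ≤ b then v else -v with hvd
  have hu'' : u'^6 = 1 := by rw [hud]; split <;> assumption
  have hv'' : v'^6 = 1 := by rw [hvd]; split <;> assumption
  have key : (a:ℂ)*u + (b:ℂ)*v = (a.natAbs : ℂ) * u' + (b.natAbs : ℂ) * v' := by
    rw [hud, hvd]
    rcases le_or_gt 0 a with ha | ha <;> rcases le_or_gt 0 b with hb | hb
    · rw [if_pos ha, if_pos hb, cast_natAbs_nonneg ha, cast_natAbs_nonneg hb]
    · rw [if_pos ha, if_neg (not_le.mpr hb), cast_natAbs_nonneg ha, cast_natAbs_neg hb]; ring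
    · rw [if_neg (not_le.mpr ha), if_pos hb, cast_natAbs_neg ha, cast_natAbs_nonneg hb]; ring
    · rw [if_neg (not_le.mpr ha), if_neg (not_le.mpr hb), cast_natAbs_neg ha,
        cast_natAbs_neg hb]; ring
  rw [key]
  exact mem_set_nat u' v' hu'' hv'' a.natAbs b.natAbs

lemma combLen_le_int (u v : ℂ) (hu : u^6 = 1) (hv : v^6 = 1) (a b : ℤ) :
    combLen ((a:ℂ)*u + (b:ℂ)*v) ≤ a.natAbs + b.natAbs :=
  Nat.sInf_le (mem_set_int u v hu hv a b)

/-- abs of a sixth root of unity is 1 -/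
lemma abs_eq_one_of_pow6 {x : ℂ} (hx : x^6 = 1) : ‖x‖ = 1 := by
  have h : ‖x‖^6 = 1 := by
    rw [← norm_pow, hx, norm_one]
  have h0 : 0 ≤ ‖x‖ := norm_nonneg x
  rcases lt_trichotomy ‖x‖ 1 with hl | he | hg
  · exfalso; nlinarith [pow_lt_one₀ h0 hl (by norm_num : (6:ℕ) ≠ 0)]
  · exact he
  · exfalso; nlinarith [one_lt_pow₀ hg (by norm_num : (6:ℕ) ≠ 0)]

/-- if z ∈ ℤ[ζ] has combinatorial length ≥ 6, then every nonzero
multiple t = wz (w ∈ ℤ[ζ], w ≠ 0) has combinatorial length ≥ 6. -/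
theorem combLen_multiple_ge_six (z w : ℂ) (hz : z ∈ Eisenstein) (hw : w ∈ Eisenstein)
    (hlen : 6 ≤ combLen z) (hw0 : w ≠ 0) : 6 ≤ combLen (w * z) := by
  by_contra hcon
  push_neg at hcon
  -- representations
  obtain ⟨a, b, hzab⟩ := rep_of_mem hz
  obtain ⟨c, d, hwcd⟩ := rep_of_mem hw
  -- the defining set for w*z is nonempty
  obtain ⟨p, q, hpq⟩ := rep_of_mem (mul_mem hw hz)
  have hne : {n : ℕ | ∃ f : Fin n → ℂ, (∀ k, (f k) ^ 6 = 1) ∧ w * z = ∑ k, f k}.Nonempty := by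
    refine ⟨p.natAbs + q.natAbs, ?_⟩
    have := mem_set_int 1 zeta6 (by norm_num) zeta6_pow6 p q
    simpa [mul_one, hpq] using this
  set m := combLen (w * z) with hm
  obtain ⟨f, hf, hsum⟩ : ∃ f : Fin m → ℂ, (∀ k, (f k) ^ 6 = 1) ∧ w * z = ∑ k, f k :=
    Nat.sInf_mem hne
  -- |wz| ≤ m ≤ 5
  have habs : ‖w * z‖ ≤ (m : ℝ) := by
    rw [hsum]
    calc ‖∑ k, f k‖ ≤ ∑ k, ‖f k‖ := by
          exact norm_sum_le Finset.univ f
    _ = (m : ℝ) := by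
          rw [Finset.sum_congr rfl (fun k _ => abs_eq_one_of_pow6 (hf k))]
          simp
  have hm5 : (m : ℝ) ≤ 5 := by
    have : m ≤ 5 := by omega
    exact_mod_cast this
  -- normSq w ≥ 1
  have hcd0 : ¬(c = 0 ∧ d = 0) := by
    rintro ⟨rfl, rfl⟩
    apply hw0
    rw [hwcd]; simp
  have hwge : (1 : ℝ) ≤ Complex.normSq w := by
    rw [hwcd, normSq_rep]
    have : (1 : ℤ) ≤ c^2 + c*d + d^2 := by
      rcases eq_or_ne d 0 with rfl | hd
      · have hc : c ≠ 0 := by tauto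
        have : 1 ≤ c^2 := by nlinarith [Int.one_le_abs hc, sq_abs c]
        nlinarith
      · have : 1 ≤ d^2 := by nlinarith [Int.one_le_abs hd, sq_abs d]
        have h4 : 3 ≤ 4*(c^2 + c*d + d^2) := by nlinarith [sq_nonneg (2*c + d)]
        nlinarith
    exact_mod_cast this
  -- normSq z ≤ 25
  have hzle : Complex.normSq z ≤ 25 := by
    have h1 : Complex.normSq z ≤ Complex.normSq z * Complex.normSq w := by
      nlinarith [Complex.normSq_nonneg z]
    have h2 : Complex.normSq z * Complex.normSq w = Complex.normSq (w * z) := by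
      rw [Complex.normSq_mul]; ring
    have h3 : Complex.normSq (w * z) ≤ 25 := by
      rw [← Complex.sq_norm]
      nlinarith [norm_nonneg (w * z)]
    linarith
  have hN : (a:ℤ)^2 + a*b + b^2 ≤ 25 := by
    have := hzle
    rw [hzab, normSq_rep] at this
    exact_mod_cast this
  -- z = a·1 + b·ζ
  have hrep1 : z = (a:ℂ)*1 + (b:ℂ)*zeta6 := by rw [hzab]; ring
  have hrep2 : z = ((a+b : ℤ):ℂ)*1 + (b:ℂ)*(zeta6^2) := by
    rw [hzab]; push_cast; linear_combination (-(b:ℂ)) * zeta6_sq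
  have hrep3 : z = ((a+b : ℤ):ℂ)*zeta6 + ((-a : ℤ):ℂ)*(zeta6^2) := by
    rw [hzab]; push_cast; linear_combination ((a:ℂ)) * zeta6_sq
  have h1u : (1:ℂ)^6 = 1 := by norm_num
  -- derive combLen z ≤ 5 by cases, contradicting hlen
  have hle5 : combLen z ≤ 5 := by
    rcases le_or_gt 0 a with ha | ha <;> rcases le_or_gt 0 b with hb | hb
    · -- a ≥ 0, b ≥ 0 : use rep1, n = a + b
      have h := combLen_le_int 1 zeta6 h1u zeta6_pow6 a b
      rw [← hrep1] at h
      have hab : a + b ≤ 5 := by nlinarith [sq_nonneg (a - b)]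
      omega
    · rcases le_or_gt 0 (a + b) with hs | hs
      · -- a ≥ 0 > b, a+b ≥ 0 : rep2, n = (a+b) + |b| = a
        have h := combLen_le_int 1 (zeta6^2) h1u zeta6_sq_pow6 (a+b) b
        rw [← hrep2] at h
        have hb5 : a ≤ 5 := by nlinarith [sq_nonneg (a + 2*b)]
        omega
      · -- a ≥ 0 > b, a+b < 0 : rep3, n = -(a+b) + a = -b
        have h := combLen_le_int zeta6 (zeta6^2) zeta6_pow6 zeta6_sq_pow6 (a+b) (-a)
        rw [← hrep3] at h
        have hb5 : -b ≤ 5 := by nlinarith [sq_nonneg (2*a + b)]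
        omega
    · rcases le_or_gt 0 (a + b) with hs | hs
      · -- a < 0 ≤ b, a+b ≥ 0 : rep3, n = (a+b) + (-a) = b
        have h := combLen_le_int zeta6 (zeta6^2) zeta6_pow6 zeta6_sq_pow6 (a+b) (-a)
        rw [← hrep3] at h
        have hb5 : b ≤ 5 := by nlinarith [sq_nonneg (2*a + b)]
        omega
      · -- a < 0 ≤ b, a+b < 0 : rep2, n = -(a+b) + b = -a
        have h := combLen_le_int 1 (zeta6^2) h1u zeta6_sq_pow6 (a+b) b
        rw [← hrep2] at h
        have hb5 : -a ≤ 5 := by nlinarith [sq_nonneg (a + 2*b)]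
        omega
    · -- a < 0, b < 0 : rep1
      have h := combLen_le_int 1 zeta6 h1u zeta6_pow6 a b
      rw [← hrep1] at h
      have hab : -(a + b) ≤ 5 := by nlinarith [sq_nonneg (a - b)]
      omega
  omega
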